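/- Let Ω = {1,2,3,4} and define Buy(X) = min{ (X(1)+X(2))/2, (X(1)+X(2)+X(3)+X(4))/4 }. Then for every nonempty S ⊆ Ω, min_{ω∈S} 1_{\{2,3,4\}}(ω) + min_{ω∈S} 1_{\{2\}}(ω) ≥ min_{ω∈S} 1_{\{2,3\}}(ω) + min_{ω∈S} 1_{\{2,4\}}(ω), yet Buy(1_{\{2,3,4\}}) + Buy(1_{\{2\}}) = 3/4 < 1 = Buy(1_{\{2,3\}}) + Buy(1_{\{2,4\}}). Hence the corresponding betting function is coherent but not B-consistent. -/

import Mathlib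

open scoped Classical

variable {Ω : Type*}

/-- A betting function: for each bet `X` there is a threshold `α₀` such that the
agent rejects `X + α` for `α < α₀` and accepts it for `α ≥ α₀`. -/
def IsBettingFunction (R : (Ω → ℝ) → Bool) : Prop :=
  ∀ X : Ω → ℝ, ∃ α₀ : ℝ,
    (∀ α : ℝ, α < α₀ → R (fun ω => X ω + α) = false) ∧
    (∀ α : ℝ, α₀ ≤ α → R (fun ω => X ω + α) = true)

/-- The buy function: maximum price the agent pays for `X`. -/
noncomputable def Buy (R : (Ω → ℝ) → Bool) (X : Ω → ℝ) : ℝ :=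
  sSup {α : ℝ | R (fun ω => X ω - α) = true}

/-- The sell function: minimum price at which the agent sells `X`. -/
noncomputable def Sell (R : (Ω → ℝ) → Bool) (X : Ω → ℝ) : ℝ :=
  sInf {α : ℝ | R (fun ω => α - X ω) = true}

/-- Coherence of a betting function. -/
def Coherent (R : (Ω → ℝ) → Bool) : Prop :=
  (∀ X : Ω → ℝ, (∀ ω, 0 < X ω) → R X = true) ∧
  (∀ (X : Ω → ℝ) (c : ℝ), 0 < c → R (fun ω => c * X ω) = R X) ∧
  (∀ X Y : Ω → ℝ, R X = true → R Y = true → R (fun ω => X ω + Y ω) = true)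

/-- Indicator bet of a set. -/
noncomputable def ind (A : Set Ω) : Ω → ℝ := A.indicator fun _ => 1

/-- A belief valuation. -/
def BeliefValuation (B : Set Ω → Bool) : Prop :=
  (∀ A : Set Ω, B A = true → B Aᶜ = false) ∧
  (∀ A C : Set Ω, B A = true → A ⊆ C → B C = true) ∧
  (∀ A C : Set Ω, B A = true → B C = true → B (A ∩ C) = true) ∧
  B Set.univ = true

/-- Guaranteed revenue of a bet under a belief valuation. -/
noncomputable def GB (B : Set Ω → Bool) (X : Ω → ℝ) : ℝ :=
  sSup ((fun A => sInf (X '' A)) '' {A | B A = true})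

/-- P-consistency: compare guaranteed revenues of combined bets. -/
def PConsistent (R : (Ω → ℝ) → Bool) : Prop :=
  ∀ (N M : ℕ) (X : Fin N → Ω → ℝ) (Y : Fin M → Ω → ℝ),
    (∀ E : Set Ω, E.Nonempty →
      sInf ((fun ω => ∑ i, X i ω) '' E) ≤ sInf ((fun ω => ∑ j, Y j ω) '' E)) →
    ∑ i, Buy R (X i) ≤ ∑ j, Buy R (Y j)

/-- B-consistency: compare sums of guaranteed revenues of individual bets. -/
def BConsistent (R : (Ω → ℝ) → Bool) : Prop :=
  ∀ (N M : ℕ) (X : Fin N → Ω → ℝ) (Y : Fin M → Ω → ℝ),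
    (∀ E : Set Ω, E.Nonempty →
      ∑ i, sInf (X i '' E) ≤ ∑ j, sInf (Y j '' E)) →
    ∑ i, Buy R (X i) ≤ ∑ j, Buy R (Y j)

/-- A (finitely additive) probability distribution with values in `[0,1]`. -/
def IsProbDist (P : Set Ω → ℝ) : Prop :=
  (∀ A : Set Ω, 0 ≤ P A ∧ P A ≤ 1) ∧ P ∅ = 0 ∧ P Set.univ = 1 ∧
  ∀ A C : Set Ω, P (A ∪ C) = P A + P C - P (A ∩ C)

/-- A basic belief assignment. -/
def IsBBA [Fintype Ω] (m : Finset Ω → ℝ) : Prop :=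
  (∀ S : Finset Ω, 0 ≤ m S ∧ m S ≤ 1) ∧ m ∅ = 0 ∧ ∑ S : Finset Ω, m S = 1

/-- Choquet integral of `X` with respect to the bba `m`. -/
noncomputable def Choquet [Fintype Ω] (m : Finset Ω → ℝ) (X : Ω → ℝ) : ℝ :=
  ∑ S : Finset Ω, m S * sInf (X '' (S : Set Ω))

/-- The belief function induced by a bba. -/
noncomputable def BelOf [Fintype Ω] (m : Finset Ω → ℝ) (A : Set Ω) : ℝ :=
  ∑ S ∈ Finset.univ.filter (fun S : Finset Ω => (S : Set Ω) ⊆ A), m S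

/-- Complete monotonicity (condition (B2)). -/
def CompletelyMonotone (Bel : Set Ω → ℝ) : Prop :=
  ∀ (N : ℕ) (A : Fin N → Set Ω),
    ∑ I ∈ (Finset.univ : Finset (Finset (Fin N))).filter (fun I => I ≠ ∅),
      (-1 : ℝ) ^ (I.card + 1) * Bel (⋂ i ∈ I, A i) ≤ Bel (⋃ i, A i)

/-- Shafer belief function. -/
def IsBeliefFunction (Bel : Set Ω → ℝ) : Prop :=
  (∀ A : Set Ω, 0 ≤ Bel A ∧ Bel A ≤ 1) ∧ Bel ∅ = 0 ∧ Bel Set.univ = 1 ∧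
  CompletelyMonotone Bel

/-- The example buy functional on `Ω = {1,2,3,4}` (encoded as `Fin 4`,
with `1,2,3,4` corresponding to `0,1,2,3`). -/
noncomputable def BuyEx (X : Fin 4 → ℝ) : ℝ :=
  min ((X 0 + X 1) / 2) ((X 0 + X 1 + X 2 + X 3) / 4)


lemma indInf_aux {Ω : Type*} (A S : Set Ω) (hS : S.Nonempty) :
    sInf (ind A '' S) = if S ⊆ A then 1 else 0 := by
  split_ifs with h
  · have himg : ind A '' S = {1} := by
      apply Set.eq_singleton_iff_nonempty_unique_mem.mpr
      refine ⟨hS.image _, ?_⟩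
      rintro y ⟨x, hx, rfl⟩
      simp [ind, Set.indicator_of_mem (h hx)]
    rw [himg, csInf_singleton]
  · rw [Set.not_subset] at h
    obtain ⟨x, hxS, hxA⟩ := h
    have hnn : ∀ y ∈ ind A '' S, (0:ℝ) ≤ y := by
      rintro y ⟨z, hz, rfl⟩
      exact Set.indicator_nonneg (fun _ _ => zero_le_one) _
    apply le_antisymm
    · exact csInf_le ⟨0, fun y hy => hnn y hy⟩
        ⟨x, hxS, by simp [ind, Set.indicator_of_notMem hxA]⟩
    · exact le_csInf (hS.image _) hnn

lemma buyEx_sub (X : Fin 4 → ℝ) (α : ℝ) :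
    BuyEx (fun ω => X ω - α) = BuyEx X - α := by
  simp only [BuyEx]
  rw [show (X 0 - α + (X 1 - α)) / 2 = (X 0 + X 1) / 2 - α by ring,
    show (X 0 - α + (X 1 - α) + (X 2 - α) + (X 3 - α)) / 4
      = (X 0 + X 1 + X 2 + X 3) / 4 - α by ring]
  exact (min_sub_sub_right _ _ _)

lemma buy_eval (X : Fin 4 → ℝ) :
    Buy (fun Y => decide (0 ≤ BuyEx Y)) X = BuyEx X := by
  have hset : {α : ℝ | (decide (0 ≤ BuyEx (fun ω => X ω - α))) = true}
      = Set.Iic (BuyEx X) := by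
    ext α
    simp only [Set.mem_setOf_eq, decide_eq_true_eq, Set.mem_Iic, buyEx_sub,
      sub_nonneg]
  unfold Buy
  rw [hset, csSup_Iic]

lemma part1 : ∀ S : Set (Fin 4), S.Nonempty →
    sInf (ind ({1, 2, 3} : Set (Fin 4)) '' S) + sInf (ind ({1} : Set (Fin 4)) '' S) ≥
    sInf (ind ({1, 2} : Set (Fin 4)) '' S) + sInf (ind ({1, 3} : Set (Fin 4)) '' S) := by
  intro S hS
  rw [indInf_aux _ _ hS, indInf_aux _ _ hS, indInf_aux _ _ hS, indInf_aux _ _ hS]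
  have h12 : S ⊆ ({1,2} : Set (Fin 4)) → S ⊆ ({1,2,3} : Set (Fin 4)) := fun h x hx => by
    have := h hx; simp only [Set.mem_insert_iff, Set.mem_singleton_iff] at *; tauto
  have h13 : S ⊆ ({1,3} : Set (Fin 4)) → S ⊆ ({1,2,3} : Set (Fin 4)) := fun h x hx => by
    have := h hx; simp only [Set.mem_insert_iff, Set.mem_singleton_iff] at *; tauto
  have hboth : S ⊆ ({1,2} : Set (Fin 4)) → S ⊆ ({1,3} : Set (Fin 4)) →
      S ⊆ ({1} : Set (Fin 4)) := fun ha hb x hx => by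
    have h1 := ha hx; have h2 := hb hx
    simp only [Set.mem_insert_iff, Set.mem_singleton_iff] at *
    rcases h1 with rfl | rfl
    · rfl
    · rcases h2 with h2 | h2 <;> exact absurd h2 (by decide)
  split_ifs <;> norm_num <;> tauto

lemma buyEx_vals :
    BuyEx (ind ({1, 2, 3} : Set (Fin 4))) = 1/2 ∧
    BuyEx (ind ({1} : Set (Fin 4))) = 1/4 ∧
    BuyEx (ind ({1, 2} : Set (Fin 4))) = 1/2 ∧
    BuyEx (ind ({1, 3} : Set (Fin 4))) = 1/2 := by
  norm_num [BuyEx, ind, Set.indicator, Set.mem_insert_iff, Set.mem_singleton_iff,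
    show (0:Fin 4) ≠ 1 by decide, show (0:Fin 4) ≠ 2 by decide,
    show (0:Fin 4) ≠ 3 by decide, show (2:Fin 4) ≠ 1 by decide,
    show (2:Fin 4) ≠ 3 by decide, show (3:Fin 4) ≠ 1 by decide,
    show (3:Fin 4) ≠ 2 by decide, show (1:Fin 4) ≠ 2 by decide,
    show (1:Fin 4) ≠ 3 by decide]

theorem example_not_BConsistent :
    (∀ S : Set (Fin 4), S.Nonempty →
      sInf (ind ({1, 2, 3} : Set (Fin 4)) '' S) + sInf (ind ({1} : Set (Fin 4)) '' S) ≥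
      sInf (ind ({1, 2} : Set (Fin 4)) '' S) + sInf (ind ({1, 3} : Set (Fin 4)) '' S)) ∧
    BuyEx (ind ({1, 2, 3} : Set (Fin 4))) + BuyEx (ind ({1} : Set (Fin 4))) = 3 / 4 ∧
    BuyEx (ind ({1, 2} : Set (Fin 4))) + BuyEx (ind ({1, 3} : Set (Fin 4))) = 1 ∧
    (3 / 4 : ℝ) < 1 ∧
    Coherent (fun X => decide (0 ≤ BuyEx X)) ∧
    ¬ BConsistent (fun X => decide (0 ≤ BuyEx X)) := by
  obtain ⟨v1, v2, v3, v4⟩ := buyEx_vals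
  refine ⟨part1, by rw [v1, v2]; norm_num, by rw [v3, v4]; norm_num, by norm_num, ?_, ?_⟩
  · refine ⟨?_, ?_, ?_⟩
    · intro X hX
      simp only [decide_eq_true_eq, BuyEx]
      have h0 := hX 0; have h1 := hX 1; have h2 := hX 2; have h3 := hX 3
      apply decide_eq_true
      apply le_min <;> linarith
    · intro X c hc
      have hEq : BuyEx (fun ω => c * X ω) = c * BuyEx X := by
        simp only [BuyEx]
        rw [show (c * X 0 + c * X 1) / 2 = c * ((X 0 + X 1) / 2) by ring,
          show (c * X 0 + c * X 1 + c * X 2 + c * X 3) / 4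
            = c * ((X 0 + X 1 + X 2 + X 3) / 4) by ring,
          mul_min_of_nonneg _ _ hc.le]
      simp only [hEq, decide_eq_decide]
      exact mul_nonneg_iff_of_pos_left hc
    · intro X Y hX hY
      simp only [decide_eq_true_eq] at *
      have hadd : BuyEx X + BuyEx Y ≤ BuyEx (fun ω => X ω + Y ω) := by
        simp only [BuyEx]
        apply le_min
        · calc min ((X 0 + X 1)/2) _ + min ((Y 0 + Y 1)/2) _
              ≤ (X 0 + X 1)/2 + (Y 0 + Y 1)/2 :=
                add_le_add (min_le_left _ _) (min_le_left _ _)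
            _ = (X 0 + Y 0 + (X 1 + Y 1))/2 := by ring
        · calc min _ ((X 0 + X 1 + X 2 + X 3)/4) + min _ ((Y 0 + Y 1 + Y 2 + Y 3)/4)
              ≤ (X 0 + X 1 + X 2 + X 3)/4 + (Y 0 + Y 1 + Y 2 + Y 3)/4 :=
                add_le_add (min_le_right _ _) (min_le_right _ _)
            _ = (X 0 + Y 0 + (X 1 + Y 1) + (X 2 + Y 2) + (X 3 + Y 3))/4 := by ring
      linarith
  · intro hB
    have := hB 2 2 ![ind ({1,2} : Set (Fin 4)), ind ({1,3} : Set (Fin 4))]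
      ![ind ({1,2,3} : Set (Fin 4)), ind ({1} : Set (Fin 4))]
      (by
        intro E hE
        simp only [Fin.sum_univ_two, Matrix.cons_val_zero, Matrix.cons_val_one,
          Matrix.head_cons]
        have := part1 E hE
        linarith)
    simp only [Fin.sum_univ_two, Matrix.cons_val_zero, Matrix.cons_val_one,
      Matrix.head_cons, buy_eval, v1, v2, v3, v4] at this
    linarith
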